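/- If C is a real n×n matrix with CᵀC = CCᵀ = α²I for some α with 0 < α < 1, and Σ₁, Σ₂ are diagonal positive definite n×n matrices, then with γ = 1/(1−α²) and Σ_C = [[I, Cᵀ],[C, I]], Σ_q = bdiag(Σ₁,Σ₂), μ = (μ₁; μ₂): ½[ln(det Σ_C/det Σ_q) − 2n + μᵀΣ_C⁻¹μ + tr(Σ_C⁻¹Σ_q)] = ½[γμ₁ᵀμ₁ − ln det Σ₁ − n + γ tr Σ₁] + ½[γμ₂ᵀμ₂ − ln det Σ₂ − n + γ tr Σ₂] − ½[n ln γ + 2γ μ₁ᵀCᵀμ₂]. -/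

import Mathlib

open Matrix

lemma trace_fromBlocks' {n : ℕ} (A B C D : Matrix (Fin n) (Fin n) ℝ) :
    (Matrix.fromBlocks A B C D).trace = A.trace + D.trace := by
  simp [Matrix.trace, Fintype.sum_sum_type, Matrix.fromBlocks, Matrix.diag]

/-- Simplification of the Gaussian KL-divergence expression under the
scaled-orthogonality assumption `Cᵀ C = C Cᵀ = α² I`. -/
theorem stmt_19 {n : ℕ} (C : Matrix (Fin n) (Fin n) ℝ) (α : ℝ)
    (hα : 0 < α) (hα1 : α < 1)
    (hC₁ : Cᵀ * C = α ^ 2 • 1) (hC₂ : C * Cᵀ = α ^ 2 • 1)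
    (S₁ S₂ : Matrix (Fin n) (Fin n) ℝ)
    (hS₁d : S₁.IsDiag) (hS₂d : S₂.IsDiag) (hS₁ : S₁.PosDef) (hS₂ : S₂.PosDef)
    (μ₁ μ₂ : Fin n → ℝ) :
    (1 / 2) * (Real.log ((Matrix.fromBlocks 1 Cᵀ C 1).det /
          (Matrix.fromBlocks S₁ 0 0 S₂).det) - 2 * n +
        Sum.elim μ₁ μ₂ ⬝ᵥ (Matrix.fromBlocks 1 Cᵀ C 1)⁻¹ *ᵥ Sum.elim μ₁ μ₂ +
        ((Matrix.fromBlocks 1 Cᵀ C 1)⁻¹ * Matrix.fromBlocks S₁ 0 0 S₂).trace) =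
      (1 / 2) * ((1 / (1 - α ^ 2)) * (μ₁ ⬝ᵥ μ₁) - Real.log S₁.det - n +
          (1 / (1 - α ^ 2)) * S₁.trace) +
        (1 / 2) * ((1 / (1 - α ^ 2)) * (μ₂ ⬝ᵥ μ₂) - Real.log S₂.det - n +
          (1 / (1 - α ^ 2)) * S₂.trace) -
        (1 / 2) * (n * Real.log (1 / (1 - α ^ 2)) +
          2 * (1 / (1 - α ^ 2)) * (μ₁ ⬝ᵥ Cᵀ *ᵥ μ₂)) := by
  have hβ : (0:ℝ) < 1 - α ^ 2 := by nlinarith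
  set γ : ℝ := 1 / (1 - α ^ 2) with hγ
  -- determinant of Σ_C
  have hdet : (Matrix.fromBlocks 1 Cᵀ C (1 : Matrix (Fin n) (Fin n) ℝ)).det
      = (1 - α ^ 2) ^ n := by
    rw [Matrix.det_fromBlocks_one₂₂, hC₁]
    have : (1 : Matrix (Fin n) (Fin n) ℝ) - α ^ 2 • 1 = (1 - α ^ 2) • 1 := by
      rw [sub_smul, one_smul]
    rw [this, Matrix.det_smul, Matrix.det_one, mul_one, Fintype.card_fin]
  -- inverse of Σ_C
  have hinv : (Matrix.fromBlocks 1 Cᵀ C (1 : Matrix (Fin n) (Fin n) ℝ))⁻¹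
      = γ • Matrix.fromBlocks 1 (-Cᵀ) (-C) 1 := by
    apply Matrix.inv_eq_right_inv
    rw [Matrix.mul_smul, Matrix.fromBlocks_multiply]
    simp only [Matrix.one_mul, Matrix.mul_one, Matrix.mul_neg, hC₂, hC₁,
      add_neg_cancel, neg_add_cancel]
    have h1 : (1 : Matrix (Fin n) (Fin n) ℝ) + -(α ^ 2 • 1) = (1 - α ^ 2) • 1 := by
      rw [sub_smul, one_smul, sub_eq_add_neg]
    have h1' : -(α ^ 2 • (1 : Matrix (Fin n) (Fin n) ℝ)) + 1 = (1 - α ^ 2) • 1 := by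
      rw [sub_smul, one_smul, sub_eq_add_neg, add_comm]
    rw [h1, h1']
    have h6 : Matrix.fromBlocks ((1 - α ^ 2) • (1 : Matrix (Fin n) (Fin n) ℝ))
        (0 : Matrix (Fin n) (Fin n) ℝ) (0 : Matrix (Fin n) (Fin n) ℝ)
        ((1 - α ^ 2) • (1 : Matrix (Fin n) (Fin n) ℝ))
        = (1 - α ^ 2) • Matrix.fromBlocks (1 : Matrix (Fin n) (Fin n) ℝ)
          (0 : Matrix (Fin n) (Fin n) ℝ) (0 : Matrix (Fin n) (Fin n) ℝ)
          (1 : Matrix (Fin n) (Fin n) ℝ) := by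
      rw [Matrix.fromBlocks_smul, smul_zero]
    rw [h6, smul_smul]
    have : γ * (1 - α ^ 2) = 1 := by rw [hγ, one_div, inv_mul_cancel₀ hβ.ne']
    rw [this, one_smul, Matrix.fromBlocks_one]
  -- quadratic form
  have hquad : Sum.elim μ₁ μ₂ ⬝ᵥ (Matrix.fromBlocks 1 Cᵀ C (1:Matrix (Fin n) (Fin n) ℝ))⁻¹
        *ᵥ Sum.elim μ₁ μ₂
      = γ * (μ₁ ⬝ᵥ μ₁ + μ₂ ⬝ᵥ μ₂ - 2 * (μ₁ ⬝ᵥ Cᵀ *ᵥ μ₂)) := by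
    rw [hinv, Matrix.smul_mulVec, dotProduct_smul, smul_eq_mul]
    congr 1
    rw [Matrix.fromBlocks_mulVec, sumElim_dotProduct_sumElim]
    simp only [Matrix.one_mulVec, Matrix.add_mulVec, dotProduct_add,
      Sum.elim_comp_inl, Sum.elim_comp_inr]
    have h4 : μ₂ ⬝ᵥ (-C) *ᵥ μ₁ = -(μ₁ ⬝ᵥ Cᵀ *ᵥ μ₂) := by
      rw [Matrix.neg_mulVec, dotProduct_neg, Matrix.dotProduct_mulVec,
        ← Matrix.mulVec_transpose, dotProduct_comm]
    rw [h4]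
    have h5 : μ₁ ⬝ᵥ (-Cᵀ) *ᵥ μ₂ = -(μ₁ ⬝ᵥ Cᵀ *ᵥ μ₂) := by
      rw [Matrix.neg_mulVec, dotProduct_neg]
    rw [h5]; ring
  -- trace
  have htr : ((Matrix.fromBlocks 1 Cᵀ C (1:Matrix (Fin n) (Fin n) ℝ))⁻¹
        * Matrix.fromBlocks S₁ 0 0 S₂).trace = γ * (S₁.trace + S₂.trace) := by
    rw [hinv, Matrix.smul_mul, Matrix.fromBlocks_multiply, Matrix.trace_smul]
    simp only [Matrix.one_mul, Matrix.mul_zero, Matrix.mul_one, add_zero, zero_add,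
      Matrix.neg_mul]
    rw [trace_fromBlocks']
    simp [smul_eq_mul]
  -- determinant of Σ_q
  have hdetq : (Matrix.fromBlocks S₁ 0 0 S₂).det = S₁.det * S₂.det :=
    Matrix.det_fromBlocks_zero₂₁ _ _ _
  have hd₁ : 0 < S₁.det := hS₁.det_pos
  have hd₂ : 0 < S₂.det := hS₂.det_pos
  -- log computation
  have hlog : Real.log ((Matrix.fromBlocks 1 Cᵀ C (1:Matrix (Fin n) (Fin n) ℝ)).det /
        (Matrix.fromBlocks S₁ 0 0 S₂).det)
      = -(n * Real.log γ) - Real.log S₁.det - Real.log S₂.det := by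
    rw [hdet, hdetq, Real.log_div (by positivity) (by positivity),
      Real.log_pow, Real.log_mul hd₁.ne' hd₂.ne']
    have : Real.log γ = -Real.log (1 - α ^ 2) := by
      rw [hγ, one_div, Real.log_inv]
    rw [this]; ring
  rw [hquad, htr, hlog]
  ring
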